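/- Let q ≥ 2, G ≥ 1, K ≥ 1, M = K·G, and consider the GroupMax network h^θ : ℝ^d → ℝ defined by z¹ = ρ(A¹x + B¹), z^i = ρ((A^i)⁺ z^{i−1} + B^i) for 1 < i < q, and h^θ(x) = max_{1 ≤ m ≤ M} ((A^q)⁺ z^{q−1} + B^q)_m, where A¹ ∈ ℝ^{M×d}, A^j ∈ ℝ^{M×K} for 2 ≤ j ≤ q, B^j ∈ ℝ^M, (·)⁺ is the entrywise positive part, and ρ : ℝ^M → ℝ^K is the group-max activation. Then h^θ is the pointwise maximum of finitely many affine functions of x; in particular there exist N ≤ M·G^{K(q−1)} vectors C_1, …, C_N ∈ ℝ^d and scalars c_1, …, c_N such that h^θ(x) = max_{1 ≤ n ≤ N} (⟨C_n, x⟩ + c_n) for all x ∈ ℝ^d. Consequently h^θ is convex. -/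

import Mathlib

/-- Index `k*G + l`: the `l`-th element of the `k`-th group of `G` consecutive
coordinates among `K * G` coordinates. -/
def groupIdx {K G : ℕ} (k : Fin K) (l : Fin G) : Fin (K * G) :=
  finProdFinEquiv (k, l)

/-- The GroupMax activation `ρ : ℝ^{K·G} → ℝ^K`:
`ρ(v)_k = max (v_{kG+1}, …, v_{kG+G})`, the max over the `k`-th group of `G`
consecutive coordinates. -/
noncomputable def groupMaxAct {K G : ℕ} (v : Fin (K * G) → ℝ) : Fin K → ℝ :=
  fun k => ⨆ l : Fin G, v (groupIdx k l)

/-- Entrywise positive part `(A)⁺` of a real matrix. -/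
def matPos {m n : Type*} (A : Matrix m n ℝ) : Matrix m n ℝ :=
  fun i j => max (A i j) 0

/-- Hidden layers of the GroupMax network, with per-layer group counts `K j` and
group sizes `G j` (layer `j+1` of the paper has `K j * G j` neurons):
`gmZ K G A1 A B x 0 = z¹ = ρ(A¹ x + B¹)` and
`gmZ K G A1 A B x (j+1) = z^{j+2} = ρ((A^{j+2})⁺ z^{j+1} + B^{j+2})`. -/
noncomputable def gmZ {d : ℕ} (K G : ℕ → ℕ)
    (A1 : Matrix (Fin (K 0 * G 0)) (Fin d) ℝ)
    (A : (j : ℕ) → Matrix (Fin (K (j + 1) * G (j + 1))) (Fin (K j)) ℝ)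
    (B : (j : ℕ) → Fin (K j * G j) → ℝ)
    (x : Fin d → ℝ) : (j : ℕ) → Fin (K j) → ℝ
  | 0 => groupMaxAct (fun m => A1.mulVec x m + B 0 m)
  | j + 1 => groupMaxAct
      (fun m => (matPos (A j)).mulVec (gmZ K G A1 A B x j) m + B (j + 1) m)

/-- The `q`-layer GroupMax network: hidden layers `z¹, …, z^{q-1}` given by `gmZ`
(so `z^{q-1} = gmZ … (q-2)`), and output
`h^θ(x) = max_{1 ≤ m ≤ Mq} ((A^q)⁺ z^{q-1} + B^q)_m`. -/
noncomputable def groupMaxNet {d : ℕ} (q : ℕ) (K G : ℕ → ℕ) (Mq : ℕ)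
    (A1 : Matrix (Fin (K 0 * G 0)) (Fin d) ℝ)
    (A : (j : ℕ) → Matrix (Fin (K (j + 1) * G (j + 1))) (Fin (K j)) ℝ)
    (B : (j : ℕ) → Fin (K j * G j) → ℝ)
    (Aq : Matrix (Fin Mq) (Fin (K (q - 2))) ℝ) (Bq : Fin Mq → ℝ)
    (x : Fin d → ℝ) : ℝ :=
  ⨆ m : Fin Mq, ((matPos Aq).mulVec (gmZ K G A1 A B x (q - 2)) m + Bq m)


private lemma bddAbove_range_fin {ι : Type*} [Finite ι] (f : ι → ℝ) :
    BddAbove (Set.range f) := (Set.finite_range f).bddAbove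

private lemma ciSup_reindex {α β : Type*} {g : α → β} (hg : Function.Surjective g)
    (f : β → ℝ) : ⨆ a, f (g a) = ⨆ b, f b := by
  show sSup (Set.range (f ∘ g)) = sSup (Set.range f)
  rw [hg.range_comp]

private lemma ciSup_prod_fin {α β : Type*} [Finite α] [Finite β] [Nonempty α] [Nonempty β]
    (f : α → β → ℝ) : ⨆ a, ⨆ b, f a b = ⨆ p : α × β, f p.1 p.2 := by
  apply le_antisymm
  · exact ciSup_le fun a => ciSup_le fun b =>
      le_ciSup (f := fun p : α × β => f p.1 p.2) (bddAbove_range_fin _) (a, b)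
  · exact ciSup_le fun p => le_trans (le_ciSup (bddAbove_range_fin _) p.2)
      (le_ciSup (f := fun a => ⨆ b, f a b) (bddAbove_range_fin _) p.1)

private lemma ciSup_add_const {ι : Type*} [Finite ι] [Nonempty ι] (f : ι → ℝ) (b : ℝ) :
    (⨆ i, f i) + b = ⨆ i, (f i + b) := by
  obtain ⟨i0, hi0⟩ := Finite.exists_max f
  have h1 : (⨆ i, f i) = f i0 :=
    le_antisymm (ciSup_le hi0) (le_ciSup (bddAbove_range_fin _) i0)
  rw [h1]
  refine le_antisymm (le_ciSup (bddAbove_range_fin fun i => f i + b) i0) ?_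
  exact ciSup_le fun i => add_le_add_left (hi0 i) b

private lemma sum_mul_ciSup {K G : ℕ} (hG : 0 < G) (a : Fin K → ℝ) (ha : ∀ k, 0 ≤ a k)
    (w : Fin K → Fin G → ℝ) :
    ∑ k, a k * (⨆ l, w k l) = ⨆ l : Fin K → Fin G, ∑ k, a k * w k (l k) := by
  haveI : Nonempty (Fin G) := Fin.pos_iff_nonempty.mp hG
  choose L hL using fun k => Finite.exists_max (w k)
  have hsup : ∀ k, (⨆ l, w k l) = w k (L k) := fun k =>
    le_antisymm (ciSup_le (hL k)) (le_ciSup (bddAbove_range_fin _) (L k))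
  apply le_antisymm
  · calc ∑ k, a k * (⨆ l, w k l) = ∑ k, a k * w k (L k) := by simp_rw [hsup]
      _ ≤ _ := le_ciSup (bddAbove_range_fin fun l : Fin K → Fin G => ∑ k, a k * w k (l k)) L
  · refine ciSup_le fun l => Finset.sum_le_sum fun k _ => ?_
    exact mul_le_mul_of_nonneg_left (le_ciSup (bddAbove_range_fin _) (l k)) (ha k)

private lemma affine_rearrange {d K : ℕ} (a : Fin K → ℝ) (v : Fin K → Fin d → ℝ)
    (β : Fin K → ℝ) (b : ℝ) (x : Fin d → ℝ) :
    (∑ k, a k * ((∑ i, v k i * x i) + β k)) + b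
      = (∑ i, (∑ k, a k * v k i) * x i) + ((∑ k, a k * β k) + b) := by
  simp only [mul_add, Finset.sum_add_distrib, Finset.mul_sum, Finset.sum_mul]
  rw [Finset.sum_comm]
  ring_nf

private lemma gmZ_maxAffine {d G K : ℕ} (hG : 1 ≤ G)
    (A1 : Matrix (Fin (K * G)) (Fin d) ℝ)
    (A : ℕ → Matrix (Fin (K * G)) (Fin K) ℝ)
    (B : ℕ → Fin (K * G) → ℝ) :
    ∀ (j : ℕ) (a : Fin K → ℝ), (∀ k, 0 ≤ a k) → ∀ (b : ℝ),
      ∃ (C : Fin (G ^ (K * (j + 1))) → Fin d → ℝ) (c : Fin (G ^ (K * (j + 1))) → ℝ),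
        ∀ x, (∑ k, a k * gmZ (fun _ => K) (fun _ => G) A1 A B x j k) + b
            = ⨆ n, ((∑ i, C n i * x i) + c n) := by
  haveI : Nonempty (Fin G) := Fin.pos_iff_nonempty.mp hG
  intro j
  induction j with
  | zero =>
    intro a ha b
    have e : Fin (G ^ (K * (0 + 1))) ≃ (Fin K → Fin G) :=
      (finCongr (by rw [Nat.zero_add, Nat.mul_one])).trans finFunctionFinEquiv.symm
    refine ⟨fun n i => ∑ k, a k * A1 (groupIdx k (e n k)) i,
      fun n => (∑ k, a k * B 0 (groupIdx k (e n k))) + b, fun x => ?_⟩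
    have h1 : ∀ k : Fin K, gmZ (fun _ => K) (fun _ => G) A1 A B x 0 k
        = ⨆ l : Fin G, (A1.mulVec x (groupIdx k l) + B 0 (groupIdx k l)) := fun k => rfl
    simp_rw [h1]
    rw [sum_mul_ciSup hG a ha, ciSup_add_const]
    rw [← ciSup_reindex e.surjective]
    refine iSup_congr fun n => ?_
    have h2 : ∀ k l, A1.mulVec x (groupIdx k l) = ∑ i, A1 (groupIdx k l) i * x i :=
      fun k l => rfl
    simp_rw [h2]
    exact affine_rearrange a _ _ b x
  | succ j IH =>
    intro a ha b
    haveI : Nonempty (Fin (G ^ (K * (j + 1)))) := Fin.pos_iff_nonempty.mp (pow_pos hG _)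
    set z := fun x => gmZ (fun _ => K) (fun _ => G) A1 A B x j with hz
    have h1 : ∀ x (k : Fin K), gmZ (fun _ => K) (fun _ => G) A1 A B x (j + 1) k
        = ⨆ l : Fin G, ((∑ k', matPos (A j) (groupIdx k l) k' * z x k')
            + B (j + 1) (groupIdx k l)) := fun x k => rfl
    set a' := fun (l : Fin K → Fin G) (k' : Fin K) =>
      ∑ k, a k * matPos (A j) (groupIdx k (l k)) k' with ha'
    have ha'nn : ∀ l k', 0 ≤ a' l k' := fun l k' =>
      Finset.sum_nonneg fun k _ => mul_nonneg (ha k) (le_max_right _ 0)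
    set b' := fun (l : Fin K → Fin G) =>
      (∑ k, a k * B (j + 1) (groupIdx k (l k))) + b with hb'
    choose C' c' hC' using fun l : Fin K → Fin G => IH (a' l) (ha'nn l) (b' l)
    have e : Fin (G ^ (K * (j + 1 + 1))) ≃ (Fin K → Fin G) × Fin (G ^ (K * (j + 1))) :=
      ((finCongr (by rw [← pow_add]; congr 1; ring)).trans finProdFinEquiv.symm).trans
        (Equiv.prodCongr finFunctionFinEquiv.symm (Equiv.refl _))
    refine ⟨fun n => C' (e n).1 (e n).2, fun n => c' (e n).1 (e n).2, fun x => ?_⟩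
    simp_rw [h1 x]
    rw [sum_mul_ciSup hG a ha, ciSup_add_const]
    have h3 : ∀ l : Fin K → Fin G,
        (∑ k, a k * ((∑ k', matPos (A j) (groupIdx k (l k)) k' * z x k')
          + B (j + 1) (groupIdx k (l k)))) + b
        = ⨆ n, ((∑ i, C' l n i * x i) + c' l n) := by
      intro l
      rw [affine_rearrange a (fun k k' => matPos (A j) (groupIdx k (l k)) k')
        (fun k => B (j + 1) (groupIdx k (l k))) b (z x)]
      exact hC' l x
    simp_rw [h3]
    rw [ciSup_prod_fin (fun l n => (∑ i, C' l n i * x i) + c' l n)]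
    exact (ciSup_reindex e.surjective _).symm

/-- The `q`-layer GroupMax network (constant width `M = K·G`,
group size `G`) is a pointwise maximum of finitely many affine functions: there
are `N ≤ M·G^{K(q-1)}` cuts `(C_n, c_n)` with
`h^θ(x) = max_{1 ≤ n ≤ N} (⟨C_n, x⟩ + c_n)` for all `x`; in particular `h^θ` is
convex. -/
theorem groupMaxNet_is_maxAffine {d : ℕ} (G K q : ℕ) (hG : 1 ≤ G) (hK : 1 ≤ K)
    (hq : 2 ≤ q)
    (A1 : Matrix (Fin (K * G)) (Fin d) ℝ)
    (A : ℕ → Matrix (Fin (K * G)) (Fin K) ℝ)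
    (B : ℕ → Fin (K * G) → ℝ)
    (Aq : Matrix (Fin (K * G)) (Fin K) ℝ) (Bq : Fin (K * G) → ℝ) :
    ∃ (N : ℕ) (_ : 1 ≤ N) (C : Fin N → (Fin d → ℝ)) (c : Fin N → ℝ),
      N ≤ K * G * G ^ (K * (q - 1)) ∧
      (∀ x, groupMaxNet q (fun _ => K) (fun _ => G) (K * G) A1 A B Aq Bq x
          = ⨆ n : Fin N, ((∑ j, C n j * x j) + c n)) ∧
      ConvexOn ℝ Set.univ
        (groupMaxNet q (fun _ => K) (fun _ => G) (K * G) A1 A B Aq Bq) := by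
  haveI : Nonempty (Fin (K * G)) := Fin.pos_iff_nonempty.mp (Nat.mul_pos hK hG)
  haveI : Nonempty (Fin (G ^ (K * (q - 2 + 1)))) := Fin.pos_iff_nonempty.mp (pow_pos hG _)
  have hqq : q - 2 + 1 = q - 1 := by omega
  choose Cm cm hm using fun m : Fin (K * G) => gmZ_maxAffine hG A1 A B (q - 2)
    (fun k => matPos Aq m k) (fun k => le_max_right _ 0) (Bq m)
  set N := K * G * G ^ (K * (q - 2 + 1)) with hNdef
  haveI : Nonempty (Fin N) :=
    Fin.pos_iff_nonempty.mp (Nat.mul_pos (Nat.mul_pos hK hG) (pow_pos hG _))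
  have hN1 : 1 ≤ N := Nat.one_le_iff_ne_zero.mpr (Nat.pos_iff_ne_zero.mp
    (Nat.mul_pos (Nat.mul_pos hK hG) (pow_pos hG _)))
  have e : Fin N ≃ Fin (K * G) × Fin (G ^ (K * (q - 2 + 1))) := finProdFinEquiv.symm
  set C : Fin N → Fin d → ℝ := fun n => Cm (e n).1 (e n).2 with hC
  set c : Fin N → ℝ := fun n => cm (e n).1 (e n).2 with hc
  have hrep : ∀ x, groupMaxNet q (fun _ => K) (fun _ => G) (K * G) A1 A B Aq Bq x
      = ⨆ n : Fin N, ((∑ j, C n j * x j) + c n) := by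
    intro x
    show (⨆ m : Fin (K * G),
        ((matPos Aq).mulVec (gmZ (fun _ => K) (fun _ => G) A1 A B x (q - 2)) m + Bq m)) = _
    have h2 : ∀ m : Fin (K * G),
        (matPos Aq).mulVec (gmZ (fun _ => K) (fun _ => G) A1 A B x (q - 2)) m + Bq m
        = ⨆ n, ((∑ i, Cm m n i * x i) + cm m n) := fun m => hm m x
    simp_rw [h2]
    rw [ciSup_prod_fin (fun m n => (∑ i, Cm m n i * x i) + cm m n)]
    exact (ciSup_reindex e.surjective _).symm
  refine ⟨N, hN1, C, c, le_of_eq (by rw [hNdef, hqq]), hrep, convex_univ, ?_⟩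
  intro x _ y _ s t hs ht hst
  simp only [smul_eq_mul]
  rw [hrep, hrep, hrep]
  refine ciSup_le fun n => ?_
  have h1 : (∑ j, C n j * (s • x + t • y) j) + c n
      = s * ((∑ j, C n j * x j) + c n) + t * ((∑ j, C n j * y j) + c n) := by
    simp only [Pi.add_apply, Pi.smul_apply, smul_eq_mul]
    have e1 : ∑ j, C n j * (s * x j + t * y j)
        = s * ∑ j, C n j * x j + t * ∑ j, C n j * y j := by
      rw [Finset.mul_sum, Finset.mul_sum, ← Finset.sum_add_distrib]
      exact Finset.sum_congr rfl fun j _ => by ring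
    rw [e1]
    linear_combination (c n) * hst.symm
  rw [h1]
  exact add_le_add
    (mul_le_mul_of_nonneg_left
      (le_ciSup (f := fun n => (∑ j, C n j * x j) + c n) (bddAbove_range_fin _) n) hs)
    (mul_le_mul_of_nonneg_left
      (le_ciSup (f := fun n => (∑ j, C n j * y j) + c n) (bddAbove_range_fin _) n) ht)
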